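/- Let c > 0 and consider piecewise constant functions of time of the form F(t) = Σ_α ρ_α·1_{[t_α, t_{α+1})}(t) and F'(t) = Σ_α ρ_α·1_{[t'_α, t'_{α+1})}(t) on [0,T], where the crossing times satisfy |t'_α − t_α| ≤ (1/c)·‖η‖_{C⁰} for each α. Then ∫₀ᵀ |F(t) − F'(t)| dt ≤ (1/c)·‖η‖_{C⁰}·Σ_α |ρ_α − ρ_{α−1}|. -/

import Mathlib

open MeasureTheory

private noncomputable def indI (a : ℝ) : ℝ → ℝ := Set.indicator (Set.Ici a) (fun _ => (1:ℝ))

private lemma indI_II (a x y : ℝ) : IntervalIntegrable (indI a) volume x y := by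
  rw [intervalIntegrable_iff]
  exact (integrableOn_const measure_Ioc_lt_top.ne).indicator measurableSet_Ici

private lemma ico_eq (a b : ℝ) (hab : a ≤ b) (r s : ℝ) :
    Set.indicator (Set.Ico a b) (fun _ => r) s = r * (indI a s - indI b s) := by
  simp only [indI, Set.indicator_apply, Set.mem_Ico, Set.mem_Ici]
  by_cases h : a ≤ s ∧ s < b
  · rw [if_pos h, if_pos h.1, if_neg (not_le.2 h.2)]; ring
  · rw [if_neg h]
    by_cases h1 : a ≤ s
    · have h2 : b ≤ s := le_of_not_gt fun hb => h ⟨h1, hb⟩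
      rw [if_pos h1, if_pos h2]; ring
    · rw [if_neg h1, if_neg fun hb => h1 (hab.trans hb)]; ring

private lemma abs_ind_diff (a b s : ℝ) :
    |indI a s - indI b s|
      = Set.indicator (Set.Ico (min a b) (max a b)) (fun _ => (1:ℝ)) s := by
  simp only [indI, Set.indicator_apply, Set.mem_Ici, Set.mem_Ico]
  by_cases h1 : a ≤ s <;> by_cases h2 : b ≤ s
  · rw [if_pos h1, if_pos h2, if_neg (fun h => not_lt.2 (max_le h1 h2) h.2)]; norm_num
  · rw [if_pos h1, if_neg h2, if_pos ⟨min_le_of_left_le h1, lt_max_of_lt_right (not_le.1 h2)⟩]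
    norm_num
  · rw [if_neg h1, if_pos h2, if_pos ⟨min_le_of_right_le h2, lt_max_of_lt_left (not_le.1 h1)⟩]
    norm_num
  · rw [if_neg h1, if_neg h2,
      if_neg (fun h => absurd h.1 (not_le.2 (lt_min (not_le.1 h1) (not_le.1 h2))))]
    norm_num

private lemma int_abs_diff (a b T : ℝ) (hT : 0 ≤ T) :
    ∫ s in (0:ℝ)..T, |indI a s - indI b s| ≤ |b - a| := by
  simp only [abs_ind_diff]
  rw [intervalIntegral.integral_of_le hT, setIntegral_indicator measurableSet_Ico,
    setIntegral_const, smul_eq_mul, mul_one]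
  have h1 : volume (Set.Ioc (0:ℝ) T ∩ Set.Ico (min a b) (max a b))
      ≤ volume (Set.Ico (min a b) (max a b)) := measure_mono Set.inter_subset_right
  have h2 : (volume (Set.Ico (min a b) (max a b))).toReal = max a b - min a b := by
    rw [Real.volume_Ico, ENNReal.toReal_ofReal (by simp [min_le_max, sub_nonneg])]
  calc (volume (Set.Ioc (0:ℝ) T ∩ Set.Ico (min a b) (max a b))).toReal
      ≤ (volume (Set.Ico (min a b) (max a b))).toReal := by
        exact ENNReal.toReal_mono (by rw [Real.volume_Ico]; exact ENNReal.ofReal_ne_top) h1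
    _ = max a b - min a b := h2
    _ = |b - a| := max_sub_min_eq_abs a b

private lemma abel (n : ℕ) (ρ c : ℕ → ℝ) (h0 : c 0 = 0) (hn : c n = 0) :
    ∑ α ∈ Finset.range n, ρ α * (c α - c (α + 1))
      = ∑ α ∈ Finset.range (n - 1), (ρ (α + 1) - ρ α) * c (α + 1) := by
  have htel : ∀ m, ∑ j ∈ Finset.range m, (c j - c (j + 1)) = c 0 - c m :=
    fun m => Finset.sum_range_sub' c m
  have := Finset.sum_range_by_parts ρ (fun i => c i - c (i + 1)) n
  simp only [smul_eq_mul, htel, h0, hn, zero_sub, mul_neg, sub_zero] at this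
  rw [this]
  simp [Finset.sum_neg_distrib]

set_option maxHeartbeats 2000000 in
theorem stmt10 (T c Mη : ℝ) (hT : 0 ≤ T) (hc : 0 < c) (hMη : 0 ≤ Mη)
    (n : ℕ) (ρ t t' : ℕ → ℝ)
    (hmono : ∀ α, t α ≤ t (α + 1)) (hmono' : ∀ α, t' α ≤ t' (α + 1))
    (hfirst : t 0 = t' 0) (hlast : t n = t' n)
    (hclose : ∀ α ≤ n, |t' α - t α| ≤ 1 / c * Mη) :
    ∫ s in (0:ℝ)..T,
        |(∑ α ∈ Finset.range n,
            Set.indicator (Set.Ico (t α) (t (α + 1))) (fun _ => ρ α) s)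
          - (∑ α ∈ Finset.range n,
            Set.indicator (Set.Ico (t' α) (t' (α + 1))) (fun _ => ρ α) s)|
      ≤ 1 / c * Mη * ∑ α ∈ Finset.range (n - 1), |ρ (α + 1) - ρ α| := by
  set δ := 1 / c * Mη with hδdef
  have hδ : 0 ≤ δ := by positivity
  -- pointwise identity
  have key : ∀ s : ℝ,
      (∑ α ∈ Finset.range n,
          Set.indicator (Set.Ico (t α) (t (α + 1))) (fun _ => ρ α) s)
        - (∑ α ∈ Finset.range n,
          Set.indicator (Set.Ico (t' α) (t' (α + 1))) (fun _ => ρ α) s)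
      = ∑ α ∈ Finset.range (n - 1),
          (ρ (α + 1) - ρ α) * ((indI (t (α + 1)) s - indI (t' (α + 1)) s)) := by
    intro s
    have e1 : (∑ α ∈ Finset.range n,
        Set.indicator (Set.Ico (t α) (t (α + 1))) (fun _ => ρ α) s)
        = ∑ α ∈ Finset.range n, ρ α * (indI (t α) s - indI (t (α + 1)) s) :=
      Finset.sum_congr rfl fun α _ => ico_eq _ _ (hmono α) _ s
    have e2 : (∑ α ∈ Finset.range n,
        Set.indicator (Set.Ico (t' α) (t' (α + 1))) (fun _ => ρ α) s)
        = ∑ α ∈ Finset.range n, ρ α * (indI (t' α) s - indI (t' (α + 1)) s) :=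
      Finset.sum_congr rfl fun α _ => ico_eq _ _ (hmono' α) _ s
    rw [e1, e2, ← Finset.sum_sub_distrib]
    have e3 : ∀ α ∈ Finset.range n,
        ρ α * (indI (t α) s - indI (t (α + 1)) s)
          - ρ α * (indI (t' α) s - indI (t' (α + 1)) s)
        = ρ α * ((fun β => indI (t β) s - indI (t' β) s) α
            - (fun β => indI (t β) s - indI (t' β) s) (α + 1)) := by
      intro α _; simp only; ring
    rw [Finset.sum_congr rfl e3, abel n ρ _ (by simp [hfirst]) (by simp [hlast])]
  -- pointwise bound
  have ptbd : ∀ s : ℝ,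
      |(∑ α ∈ Finset.range n,
          Set.indicator (Set.Ico (t α) (t (α + 1))) (fun _ => ρ α) s)
        - (∑ α ∈ Finset.range n,
          Set.indicator (Set.Ico (t' α) (t' (α + 1))) (fun _ => ρ α) s)|
      ≤ ∑ α ∈ Finset.range (n - 1),
          |ρ (α + 1) - ρ α| * |indI (t (α + 1)) s - indI (t' (α + 1)) s| := by
    intro s
    rw [key s]
    exact (Finset.abs_sum_le_sum_abs _ _).trans (le_of_eq (by simp [abs_mul]))
  -- integrability
  have hint1 : IntervalIntegrable (fun s =>
      |(∑ α ∈ Finset.range n,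
          Set.indicator (Set.Ico (t α) (t (α + 1))) (fun _ => ρ α) s)
        - (∑ α ∈ Finset.range n,
          Set.indicator (Set.Ico (t' α) (t' (α + 1))) (fun _ => ρ α) s)|)
      volume 0 T := by
    have : IntervalIntegrable (fun s => ∑ α ∈ Finset.range (n - 1),
        (ρ (α + 1) - ρ α) * ((indI (t (α + 1)) s - indI (t' (α + 1)) s))) volume 0 T := by
      rw [intervalIntegrable_iff]
      apply MeasureTheory.integrable_finset_sum
      intro α _
      exact intervalIntegrable_iff.mp (((indI_II _ _ _).sub (indI_II _ _ _)).const_mul _)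
    exact ((this.congr (fun s _ => (key s).symm))).abs
  have hint2 : IntervalIntegrable (fun s =>
      ∑ α ∈ Finset.range (n - 1),
        |ρ (α + 1) - ρ α| * |indI (t (α + 1)) s - indI (t' (α + 1)) s|) volume 0 T := by
    rw [intervalIntegrable_iff]
    apply MeasureTheory.integrable_finset_sum
    intro α _
    exact intervalIntegrable_iff.mp (((indI_II _ _ _).sub (indI_II _ _ _)).abs.const_mul _)
  calc ∫ s in (0:ℝ)..T,
        |(∑ α ∈ Finset.range n,
            Set.indicator (Set.Ico (t α) (t (α + 1))) (fun _ => ρ α) s)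
          - (∑ α ∈ Finset.range n,
            Set.indicator (Set.Ico (t' α) (t' (α + 1))) (fun _ => ρ α) s)|
      ≤ ∫ s in (0:ℝ)..T, ∑ α ∈ Finset.range (n - 1),
          |ρ (α + 1) - ρ α| * |indI (t (α + 1)) s - indI (t' (α + 1)) s| :=
        intervalIntegral.integral_mono_on hT hint1 hint2 (fun s _ => ptbd s)
    _ = ∑ α ∈ Finset.range (n - 1), |ρ (α + 1) - ρ α|
          * ∫ s in (0:ℝ)..T, |indI (t (α + 1)) s - indI (t' (α + 1)) s| := by
        rw [intervalIntegral.integral_finset_sum]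
        · exact Finset.sum_congr rfl fun α _ => by
            rw [intervalIntegral.integral_const_mul]
        · intro α _
          exact (((indI_II _ _ _).sub (indI_II _ _ _)).abs.const_mul _)
    _ ≤ ∑ α ∈ Finset.range (n - 1), |ρ (α + 1) - ρ α| * δ := by
        apply Finset.sum_le_sum
        intro α hα
        have hαn : α + 1 ≤ n := by
          have := Finset.mem_range.1 hα; omega
        exact mul_le_mul_of_nonneg_left
          ((int_abs_diff _ _ T hT).trans (hclose (α + 1) hαn)) (abs_nonneg _)
    _ = δ * ∑ α ∈ Finset.range (n - 1), |ρ (α + 1) - ρ α| := by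
        rw [Finset.mul_sum]; exact Finset.sum_congr rfl fun α _ => mul_comm _ _
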